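/- Let {xₙ} be a bounded sequence in ℝ^m such that ‖xₙ - x*‖ converges for every x* in a set S ⊆ ℝ^m, and every cluster point of {xₙ} lies in S. Then {xₙ} converges to some point of S. -/

import Mathlib

open Filter Topology

theorem opial_type_convergence
    {m : ℕ} (S : Set (EuclideanSpace ℝ (Fin m))) (hS : S.Nonempty)
    (x : ℕ → EuclideanSpace ℝ (Fin m))
    (hbdd : ∃ M : ℝ, ∀ n, ‖x n‖ ≤ M)
    (hlim : ∀ xs ∈ S, ∃ l : ℝ, Filter.Tendsto (fun n => ‖x n - xs‖) Filter.atTop (nhds l))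
    (hcluster : ∀ p, MapClusterPt p Filter.atTop x → p ∈ S) :
    ∃ p ∈ S, Filter.Tendsto x Filter.atTop (nhds p) := by
  obtain ⟨M, hM⟩ := hbdd
  have hbd : Bornology.IsBounded (Metric.closedBall (0 : EuclideanSpace ℝ (Fin m)) M) :=
    Metric.isBounded_closedBall
  have hmem : ∀ n, x n ∈ Metric.closedBall (0 : EuclideanSpace ℝ (Fin m)) M := by
    intro n; simpa [Metric.mem_closedBall, dist_eq_norm] using hM n
  obtain ⟨p, -, φ, hφ, hφt⟩ := tendsto_subseq_of_bounded hbd hmem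
  have hpc : MapClusterPt p atTop x :=
    MapClusterPt.of_comp (hφ.tendsto_atTop) hφt.mapClusterPt
  have hpS : p ∈ S := hcluster p hpc
  obtain ⟨l, hl⟩ := hlim p hpS
  have h1 : Tendsto (fun n => ‖x (φ n) - p‖) atTop (nhds l) :=
    hl.comp hφ.tendsto_atTop
  have h2 : Tendsto (fun n => ‖x (φ n) - p‖) atTop (nhds 0) := by
    have := hφt.sub_const p
    simpa [Function.comp_def] using (continuous_norm.tendsto _).comp this
  have hl0 : l = 0 := tendsto_nhds_unique h1 h2
  refine ⟨p, hpS, ?_⟩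
  rw [hl0] at hl
  have : Tendsto (fun n => x n - p) atTop (nhds 0) := by
    rw [tendsto_zero_iff_norm_tendsto_zero]; exact hl
  simpa using this.add_const p
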